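/- Let P be a finite connected poset of height two containing a 4-crown {a,b,v,w} ⊆ E(P) whose inner is nonempty but which is not an hourglass-crown (no single x ∈ I_P(C) satisfies I_P(C) ⊆ ↓x ∪ ↑x). Then P does not have the fixed point property. -/
import Mathlib


def ConnectedPoset (α : Type*) [PartialOrder α] : Prop :=
  ∀ a b : α, Relation.ReflTransGen (fun u v : α => u ≤ v ∨ v ≤ u) a b

/-- A poset has height two: there is a 3-element chain but no 4-element chain. -/
def HeightTwo (α : Type*) [PartialOrder α] : Prop :=
  (∃ a b c : α, a < b ∧ b < c) ∧ ¬ ∃ a b c d : α, a < b ∧ b < c ∧ c < d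

/-- A 4-crown in `E(P)`. -/
def Is4CrownE {α : Type*} [PartialOrder α] (a b v w : α) : Prop :=
  IsMin a ∧ IsMin b ∧ a ≠ b ∧ IsMax v ∧ IsMax w ∧ v ≠ w ∧
  a < v ∧ a < w ∧ b < v ∧ b < w

/-- The inner of the 4-crown `{a,b,v,w}`. -/
def CrownInner {α : Type*} [PartialOrder α] (a b v w : α) : Set α :=
  {m | a ≤ m ∧ b ≤ m ∧ m ≤ v ∧ m ≤ w}

/-- a finite connected poset of height two containing a 4-crown
in `E(P)` with nonempty inner which is not an hourglass-crown does not have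
the fixed point property. -/
theorem stmt16 {α : Type*} [PartialOrder α] [Fintype α]
    (hconn : ConnectedPoset α) (hht : HeightTwo α)
    (a b v w : α) (hcrown : Is4CrownE a b v w)
    (hne : (CrownInner a b v w).Nonempty)
    (hnothg : ¬ ∃ m ∈ CrownInner a b v w, ∀ u ∈ CrownInner a b v w, u ≤ m ∨ m ≤ u) :
    ¬ ∀ f : α → α, Monotone f → ∃ z, f z = z := by
  classical
  obtain ⟨hmina, hminb, hab, hmaxv, hmaxw, hvw, hav, haw, hbv, hbw⟩ := hcrown
  obtain ⟨n, hn⟩ := hne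
  push_neg at hnothg
  obtain ⟨m, hm, hmn1, hmn2⟩ := hnothg n hn
  obtain ⟨ham, hbm, hmv, hmw⟩ := hm
  obtain ⟨han, hbn, hnv, hnw⟩ := hn
  intro hfpp
  set f : α → α := fun x =>
    if IsMin x then (if x = a then b else a)
    else if IsMax x then (if x = w then v else w)
    else (if x = n then m else n) with hf
  have hfmin : ∀ x, IsMin x → f x = a ∨ f x = b := by
    intro x hx
    simp only [hf, if_pos hx]
    by_cases h : x = a <;> simp [h]
  have hfmax : ∀ x, ¬ IsMin x → IsMax x → f x = v ∨ f x = w := by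
    intro x hx1 hx2
    simp only [hf, if_neg hx1, if_pos hx2]
    by_cases h : x = w <;> simp [h]
  have hfmid : ∀ x, ¬ IsMin x → ¬ IsMax x → f x = m ∨ f x = n := by
    intro x hx1 hx2
    simp only [hf, if_neg hx1, if_neg hx2]
    by_cases h : x = n <;> simp [h]
  have hmono : Monotone f := by
    intro x y hxy
    rcases eq_or_ne x y with rfl | hne'
    · exact le_refl _
    by_cases hxmin : IsMin x
    · have hfx := hfmin x hxmin
      by_cases hymin : IsMin y
      · exact absurd (le_antisymm hxy (hymin hxy)) hne'
      by_cases hymax : IsMax y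
      · have hfy := hfmax y hymin hymax
        rcases hfx with h | h <;> rcases hfy with h' | h' <;> rw [h, h'] <;>
          exact le_of_lt (by assumption)
      · have hfy := hfmid y hymin hymax
        rcases hfx with h | h <;> rcases hfy with h' | h' <;> rw [h, h'] <;> assumption
    by_cases hxmax : IsMax x
    · exact absurd (le_antisymm hxy (hxmax hxy)) hne'
    · have hfx := hfmid x hxmin hxmax
      by_cases hymin : IsMin y
      · exact absurd (le_antisymm hxy (hymin hxy)) hne'
      by_cases hymax : IsMax y
      · have hfy := hfmax y hymin hymax
        rcases hfx with h | h <;> rcases hfy with h' | h' <;> rw [h, h'] <;> assumption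
      · obtain ⟨u, hu⟩ := not_isMin_iff.mp hxmin
        obtain ⟨t, ht⟩ := not_isMax_iff.mp hymax
        exact absurd ⟨u, x, y, t, hu, lt_of_le_of_ne hxy hne', ht⟩ hht.2
  obtain ⟨z, hz⟩ := hfpp f hmono
  by_cases hzmin : IsMin z
  · by_cases hza : z = a
    · subst hza
      have : f z = b := by simp [hf, if_pos hzmin]
      exact hab (this.symm.trans hz).symm
    · have : f z = a := by simp [hf, if_pos hzmin, hza]
      exact hza (this.symm.trans hz).symm
  by_cases hzmax : IsMax z
  · by_cases hzw : z = w
    · subst hzw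
      have : f z = v := by simp [hf, if_neg hzmin, if_pos hzmax]
      exact hvw (this.symm.trans hz)
    · have : f z = w := by simp [hf, if_neg hzmin, if_pos hzmax, hzw]
      exact hzw (this.symm.trans hz).symm
  · by_cases hzn : z = n
    · subst hzn
      have : f z = m := by simp [hf, if_neg hzmin, if_neg hzmax]
      exact hmn1 (le_of_eq (this.symm.trans hz))
    · have : f z = n := by simp [hf, if_neg hzmin, if_neg hzmax, hzn]
      exact hzn (this.symm.trans hz).symm
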